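/- Let R be a commutative ring, let M ∈ ℕ, let X₀, …, X_M ∈ R, and let 0 ≤ a ≤ M. Consider the turning pattern τ with τᵢ = L for 1 ≤ i ≤ a and τᵢ = R for a < i ≤ M. Then the (2,2) entry of the product H'(X₀)·E^{τ₁}·H'(X₁)·E^{τ₂}⋯E^{τ_M}·H'(X_M) equals 1. -/

import Mathlib

/-- A turning letter `L` or `R`. -/
inductive Turn : Type
  | L : Turn
  | R : Turn

/-- The rescaled diagonal matrix `H'(X) = [[X,0],[0,1]]`. -/
def Hmat {R : Type*} [CommRing R] (X : R) : Matrix (Fin 2) (Fin 2) R :=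
  !![X, 0; 0, 1]

/-- The elementary matrices `E^L = [[1,1],[0,1]]` and `E^R = [[1,0],[1,1]]`. -/
def Emat {R : Type*} [CommRing R] : Turn → Matrix (Fin 2) (Fin 2) R
  | Turn.L => !![1, 1; 0, 1]
  | Turn.R => !![1, 0; 1, 1]

/-- The rescaled Wilson line matrix
`P(τ;X) = H'(X₀)·E^{τ₁}·H'(X₁)·E^{τ₂}⋯E^{τ_M}·H'(X_M)`. -/
def wilsonP {R : Type*} [CommRing R] {M : ℕ} (τ : Fin M → Turn)
    (X : Fin (M + 1) → R) : Matrix (Fin 2) (Fin 2) R :=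
  Hmat (X 0) * (List.ofFn fun i : Fin M => Emat (τ i) * Hmat (X i.succ)).prod

lemma prod_upper {R : Type*} [CommRing R] (l : List (Matrix (Fin 2) (Fin 2) R))
    (h : ∀ A ∈ l, A 1 0 = 0 ∧ A 1 1 = 1) : l.prod 1 0 = 0 ∧ l.prod 1 1 = 1 := by
  induction l with
  | nil => simp [Matrix.one_apply]
  | cons A t ih =>
    obtain ⟨h0, h1⟩ := h A List.mem_cons_self
    obtain ⟨ih0, ih1⟩ := ih (fun B hB => h B (List.mem_cons_of_mem _ hB))
    constructor <;>
      simp [List.prod_cons, Matrix.mul_apply, Fin.sum_univ_two, h0, h1, ih0, ih1]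

lemma prod_lower {R : Type*} [CommRing R] (l : List (Matrix (Fin 2) (Fin 2) R))
    (h : ∀ A ∈ l, A 0 1 = 0 ∧ A 1 1 = 1) : l.prod 0 1 = 0 ∧ l.prod 1 1 = 1 := by
  induction l with
  | nil => simp [Matrix.one_apply]
  | cons A t ih =>
    obtain ⟨h0, h1⟩ := h A List.mem_cons_self
    obtain ⟨ih0, ih1⟩ := ih (fun B hB => h B (List.mem_cons_of_mem _ hB))
    constructor <;>
      simp [List.prod_cons, Matrix.mul_apply, Fin.sum_univ_two, h0, h1, ih0, ih1]

/-- For the turning pattern `L,…,L,R,…,R` (first `a` letters `L`, the rest `R`),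
the `(2,2)` entry of the rescaled Wilson line matrix equals `1`. -/
theorem wilsonP_entry22_of_LR_pattern {R : Type*} [CommRing R] (M a : ℕ)
    (ha : a ≤ M) (X : Fin (M + 1) → R) :
    wilsonP (fun i : Fin M => if (i : ℕ) < a then Turn.L else Turn.R) X 1 1 = 1 := by
  have hl : ∃ l : List (Matrix (Fin 2) (Fin 2) R), l =
      List.ofFn (fun i : Fin M =>
        Emat (if (i : ℕ) < a then Turn.L else Turn.R) * Hmat (X i.succ)) := ⟨_, rfl⟩
  obtain ⟨l, hl⟩ := hl
  have hup : ∀ A ∈ l.take a, A 1 0 = 0 ∧ A 1 1 = 1 := by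
    intro A hA
    rw [List.mem_iff_getElem] at hA
    obtain ⟨i, hi, rfl⟩ := hA
    subst hl
    have hi' : i < a := lt_of_lt_of_le hi (by simp [List.length_take])
    rw [List.getElem_take]
    simp only [List.getElem_ofFn]
    rw [if_pos (by simpa using hi')]
    constructor <;> simp [Emat, Hmat, Matrix.mul_apply, Fin.sum_univ_two]
  have hlo : ∀ A ∈ l.drop a, A 0 1 = 0 ∧ A 1 1 = 1 := by
    intro A hA
    rw [List.mem_iff_getElem] at hA
    obtain ⟨i, hi, rfl⟩ := hA
    subst hl
    rw [List.getElem_drop]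
    simp only [List.getElem_ofFn]
    rw [if_neg (by simp)]
    constructor <;> simp [Emat, Hmat, Matrix.mul_apply, Fin.sum_univ_two]
  obtain ⟨u0, u1⟩ := prod_upper _ hup
  obtain ⟨d0, d1⟩ := prod_lower _ hlo
  have hsplit : l.prod = (l.take a).prod * (l.drop a).prod :=
    (List.prod_take_mul_prod_drop l a).symm
  have key : l.prod 1 1 = 1 := by
    rw [hsplit, Matrix.mul_apply, Fin.sum_univ_two, u0, u1, d1]
    ring
  simp only [wilsonP]
  rw [← hl]
  rw [Matrix.mul_apply, Fin.sum_univ_two, key]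
  simp [Hmat]
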